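/- arXiv:2305.06732 — 8 statements merged into one kernel-verified Lean document; each statement's English description precedes it below -/
import Mathlib

section
/- Suppose v = (v_1, …, v_d) ∈ S and v_i < 2^{d-2} for every index 1 ≤ i ≤ d. Then v + 𝟙 ∈ S. -/
open Finset

/-- The 0/1 vector in `ℝ^n` corresponding to a Boolean vector. -/
noncomputable def toVec {n : ℕ} (v : Fin n → Bool) : Fin n → ℝ :=
  fun i => if v i then 1 else 0

/-- The set `S` of degree sequences of hypergraphs on `n` vertices:
sums of sets of pairwise distinct 0/1 vectors. -/
def degSeqs (n : ℕ) : Set (Fin n → ℝ) :=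
  {b | ∃ U : Finset (Fin n → Bool), b = ∑ v ∈ U, toVec v}

/-- The degree-sequence polytope `Z^n`. -/
def dsPolytope (n : ℕ) : Set (Fin n → ℝ) :=
  {p | ∃ c : (Fin n → Bool) → ℝ, (∀ v, 0 ≤ c v ∧ c v ≤ 1) ∧
    p = ∑ v : Fin n → Bool, c v • toVec v}

namespace Claim2Aux

variable {d : ℕ}

lemma arith_half (a b n : ℕ) (h1 : a = b) (h2 : a + b = 2 * n) : a = n := by omega

lemma arith_flip (d a b c : ℕ) (hle : b ≤ a) (hsplit : a + b = c)
    (hc : 2 ^ (d - 1) ≤ c) (hdeg : a < 2 ^ (d - 2)) : False := by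
  rcases Nat.lt_or_ge d 2 with h | h
  · have e1 : d - 1 = 0 := by omega
    have e2 : d - 2 = 0 := by omega
    rw [e1] at hc; rw [e2] at hdeg
    simp only [pow_zero] at hc hdeg
    omega
  · obtain ⟨m, rfl⟩ : ∃ m, d = m + 2 := ⟨d - 2, by omega⟩
    have e1 : m + 2 - 1 = m + 1 := by omega
    have e2 : m + 2 - 2 = m := by omega
    rw [e1] at hc; rw [e2] at hdeg
    have h4 : (2:ℕ) ^ (m+1) = 2 * 2 ^ m := by ring
    omega

lemma arith_iff (a k : ℕ) (h : a ≠ k) : (a < k) ↔ (a < k + 1) := by omega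

lemma arith_card (a b : ℕ) (h : a = b) (h1 : 1 ≤ a) : a - 1 + 1 = b := by omega

lemma sum_toVec_apply (U : Finset (Fin d → Bool)) (i : Fin d) :
    (∑ u ∈ U, toVec u) i = ((U.filter (fun u => u i = true)).card : ℝ) := by
  rw [Finset.sum_apply]
  simp [toVec, Finset.sum_boole]

/-- pointwise complement -/
def flipAll (u : Fin d → Bool) : Fin d → Bool := fun i => !(u i)

lemma card_filter_true (hd : 0 < d) (i : Fin d) :
    (univ.filter (fun w : Fin d → Bool => w i = true)).card = 2 ^ (d - 1) := by
  obtain ⟨m, rfl⟩ : ∃ m, d = m + 1 := ⟨d - 1, (Nat.sub_add_cancel hd).symm⟩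
  have h1 : (univ.filter (fun w : Fin (m+1) → Bool => w i = true)).card
      = (univ.filter (fun w : Fin (m+1) → Bool => ¬ (w i = true))).card := by
    refine Finset.card_nbij' (fun w => Function.update w i false)
        (fun w => Function.update w i true) ?_ ?_ ?_ ?_
    · intro w hw; simp
    · intro w hw; simp
    · intro w hw
      simp only [Finset.mem_coe, Finset.mem_filter, Finset.mem_univ, true_and] at hw
      funext j
      by_cases hj : j = i
      · subst hj; simp [hw]
      · simp [Function.update_of_ne hj]
    · intro w hw
      simp only [Finset.mem_coe, Finset.mem_filter, Finset.mem_univ, true_and, Bool.not_eq_true] at hw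
      funext j
      by_cases hj : j = i
      · subst hj; simp [hw]
      · simp [Function.update_of_ne hj]
  have h2 : (univ.filter (fun w : Fin (m+1) → Bool => w i = true)).card
      + (univ.filter (fun w : Fin (m+1) → Bool => ¬ (w i = true))).card
      = (univ : Finset (Fin (m+1) → Bool)).card :=
    Finset.card_filter_add_card_filter_not _
  have h3 : (univ : Finset (Fin (m+1) → Bool)).card = 2 * 2 ^ m := by
    simp [Fintype.card_fun]
    ring
  have h5 : m + 1 - 1 = m := rfl
  rw [h5]
  exact arith_half _ _ _ h1 (h2.trans h3)

/-- if no free complementary pair, U is large -/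
lemma card_ge_of_no_free_pair (hd : 0 < d) (U : Finset (Fin d → Bool))
    (hnfp : ∀ a : Fin d → Bool, a ∉ U → flipAll a ∈ U) :
    2 ^ (d - 1) ≤ U.card := by
  classical
  have hcT : (univ.filter (fun w : Fin d → Bool => w ⟨0, hd⟩ = true)).card = 2 ^ (d-1) :=
    card_filter_true hd ⟨0, hd⟩
  have hle : (univ.filter (fun w : Fin d → Bool => w ⟨0, hd⟩ = true)).card ≤ U.card := by
    apply Finset.card_le_card_of_injOn (fun w => if w ∈ U then w else flipAll w)
    · intro w _
      by_cases hwU : w ∈ U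
      · simp [hwU]
      · simpa [hwU] using hnfp w hwU
    · intro w1 h1 w2 h2 heq
      simp only [Finset.coe_filter, Set.mem_setOf_eq, Finset.mem_univ, true_and] at h1 h2
      by_cases hw1 : w1 ∈ U <;> by_cases hw2 : w2 ∈ U <;>
        simp only [hw1, hw2, if_true, if_false] at heq
      · exact heq
      · exfalso
        have := congrFun heq ⟨0, hd⟩
        rw [h1] at this
        simp [flipAll, h2] at this
      · exfalso
        have := congrFun heq ⟨0, hd⟩
        rw [h2] at this
        simp [flipAll, h1] at this
      · funext j
        have := congrFun heq j
        simpa [flipAll] using this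
  exact le_of_eq_of_le hcT.symm hle

lemma exists_flip (W : Finset (Fin d → Bool)) (k : Fin d)
    (hc : 2 ^ (d - 1) ≤ W.card)
    (hdeg : (W.filter (fun u => u k = true)).card < 2 ^ (d - 2)) :
    ∃ u ∈ W, u k = false ∧ Function.update u k true ∉ W := by
  classical
  by_contra hcon
  push_neg at hcon
  have hinj : Set.InjOn (fun u => Function.update u k true)
      ((W.filter (fun u => ¬ (u k = true))) : Set (Fin d → Bool)) := by
    intro u1 h1 u2 h2 heq
    simp only [Finset.coe_filter, Set.mem_setOf_eq, Bool.not_eq_true] at h1 h2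
    funext j
    by_cases hj : j = k
    · subst hj; rw [h1.2, h2.2]
    · have := congrFun heq j
      simpa [Function.update_of_ne hj] using this
  have hmaps : ∀ u ∈ W.filter (fun u => ¬ (u k = true)),
      Function.update u k true ∈ W.filter (fun u => u k = true) := by
    intro u hu
    simp only [Finset.mem_filter, Bool.not_eq_true] at hu
    refine Finset.mem_filter.2 ⟨?_, by simp⟩
    exact hcon u hu.1 hu.2
  have hle := Finset.card_le_card_of_injOn _ hmaps hinj
  have hsplit : (W.filter (fun u : Fin d → Bool => u k = true)).card
      + (W.filter (fun u : Fin d → Bool => ¬ (u k = true))).card = W.card :=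
    Finset.card_filter_add_card_filter_not _
  exact arith_flip d _ _ _ hle hsplit hc hdeg

lemma flip_chain (U : Finset (Fin d → Bool)) (v : Fin d → ℝ)
    (hU : v = ∑ u ∈ U, toVec u)
    (h : ∀ i, v i < 2 ^ (d - 2)) (hcard : 2 ^ (d - 1) ≤ U.card) :
    ∀ k, k ≤ d → ∃ W : Finset (Fin d → Bool), W.card = U.card ∧
      (∑ u ∈ W, toVec u) = fun i : Fin d => v i + (if (i : ℕ) < k then 1 else 0) := by
  classical
  intro k
  induction k with
  | zero =>
    intro _
    refine ⟨U, rfl, ?_⟩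
    funext i
    simp [hU]
  | succ k ih =>
    intro hk1
    obtain ⟨W, hWcard, hWsum⟩ := ih (Nat.le_of_succ_le hk1)
    have hkd : k < d := hk1
    have hdegR : ((W.filter (fun u => u ⟨k, hkd⟩ = true)).card : ℝ) = v ⟨k, hkd⟩ := by
      rw [← sum_toVec_apply, hWsum]
      simp
    have hdegN : (W.filter (fun u => u ⟨k, hkd⟩ = true)).card < 2 ^ (d - 2) := by
      have h2 : ((W.filter (fun u => u ⟨k, hkd⟩ = true)).card : ℝ) < ((2 ^ (d-2) : ℕ) : ℝ) := by
        rw [hdegR]; push_cast; exact h ⟨k, hkd⟩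
      exact_mod_cast h2
    obtain ⟨u, huW, huk, hflip⟩ := exists_flip W ⟨k, hkd⟩ (hWcard ▸ hcard) hdegN
    have hu'erase : Function.update u ⟨k, hkd⟩ true ∉ W.erase u :=
      fun hh => hflip (Finset.mem_of_mem_erase hh)
    refine ⟨insert (Function.update u ⟨k, hkd⟩ true) (W.erase u), ?_, ?_⟩
    · rw [Finset.card_insert_of_notMem hu'erase, Finset.card_erase_of_mem huW]
      exact arith_card _ _ hWcard (Finset.card_pos.2 ⟨u, huW⟩)
    · rw [Finset.sum_insert hu'erase, Finset.sum_erase_eq_sub huW, hWsum]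
      funext i
      simp only [Pi.add_apply, Pi.sub_apply]
      by_cases hi : i = (⟨k, hkd⟩ : Fin d)
      · subst hi
        have h1 : toVec (Function.update u (⟨k, hkd⟩ : Fin d) true) (⟨k, hkd⟩ : Fin d) = 1 := by
          simp [toVec]
        have h2 : toVec u (⟨k, hkd⟩ : Fin d) = 0 := by simp [toVec, huk]
        rw [h1, h2]
        simp only [Fin.val_mk]
        rw [if_neg (lt_irrefl k), if_pos (Nat.lt_succ_self k)]
        ring
      · have h1 : toVec (Function.update u (⟨k, hkd⟩ : Fin d) true) i = toVec u i := by
          simp [toVec, Function.update_of_ne hi]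
        rw [h1]
        have hival : (i : ℕ) ≠ k := fun hh => hi (Fin.ext hh)
        have hiff : ((i:ℕ) < k) ↔ ((i:ℕ) < k + 1) := arith_iff _ _ hival
        rw [if_congr hiff rfl rfl]
        ring

end Claim2Aux

open Claim2Aux in
/-- Claim 2: if `v ∈ S` and `vᵢ < 2^(d-2)` for every index `i`, then `v + 𝟙 ∈ S`. -/
theorem claim_2 (d : ℕ) (v : Fin d → ℝ) (hv : v ∈ degSeqs d)
    (h : ∀ i, v i < 2 ^ (d - 2)) :
    (fun j => v j + 1) ∈ degSeqs d := by
  classical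
  obtain ⟨U, hU⟩ := hv
  rcases Nat.eq_zero_or_pos d with hd | hd
  · subst hd
    exact ⟨U, by funext j; exact j.elim0⟩
  by_cases hfp : ∃ a : Fin d → Bool, a ∉ U ∧ flipAll a ∉ U
  · obtain ⟨a, haU, hfaU⟩ := hfp
    have hne : flipAll a ≠ a := by
      intro hh
      have := congrFun hh ⟨0, hd⟩
      simp [flipAll] at this
    have hamem : a ∉ insert (flipAll a) U := by
      simp only [Finset.mem_insert]
      rintro (hh | hh)
      · exact hne hh.symm
      · exact haU hh
    refine ⟨insert a (insert (flipAll a) U), ?_⟩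
    rw [Finset.sum_insert hamem, Finset.sum_insert hfaU, ← hU]
    funext j
    simp only [Pi.add_apply]
    by_cases hj : a j = true
    · simp [toVec, flipAll, hj]; ring
    · simp only [Bool.not_eq_true] at hj
      simp [toVec, flipAll, hj]; ring
  · push_neg at hfp
    have hcard : 2 ^ (d-1) ≤ U.card := card_ge_of_no_free_pair hd U hfp
    obtain ⟨W, _, hWsum⟩ := flip_chain U v hU h hcard d le_rfl
    refine ⟨W, ?_⟩
    rw [hWsum]
    funext i
    simp [i.isLt]
end

section
/- Suppose q = (q_1, …, q_d) ∈ S and q_i > q_j for some indices i and j. Then the vector q' obtained from q by decreasing the i-th coordinate by 1 and increasing the j-th coordinate by 1 (i.e. q' = q − e_i + e_j) also belongs to S. -/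
open Finset

/-- Observation: if `q ∈ S` and `qᵢ > qⱼ`, then `q - eᵢ + eⱼ ∈ S`. -/
theorem observation_simple (d : ℕ) (q : Fin d → ℝ) (hq : q ∈ degSeqs d)
    (i j : Fin d) (hij : q j < q i) :
    (fun k => q k - (if k = i then 1 else 0) + (if k = j then 1 else 0)) ∈ degSeqs d := by
  classical
  obtain ⟨U, hU⟩ := hq
  have hij' : i ≠ j := by rintro rfl; exact lt_irrefl _ hij
  set sw : (Fin d → Bool) → (Fin d → Bool) :=
    fun v k => if k = i then v j else if k = j then v i else v k with hsw
  have swinv : ∀ v, sw (sw v) = v := by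
    intro v; funext k
    simp only [hsw]
    by_cases hki : k = i
    · simp [hki, hij', Ne.symm hij']
    · by_cases hkj : k = j
      · simp [hki, hkj, hij', Ne.symm hij']
      · simp [hki, hkj]
  -- q at a coordinate is a cardinality
  have hcard : ∀ k : Fin d, q k = ((U.filter fun v => v k = true).card : ℝ) := by
    intro k
    rw [hU]
    rw [Finset.sum_apply]
    rw [← Finset.sum_boole]
    refine Finset.sum_congr rfl fun v _ => ?_
    simp [toVec]
  -- split cards
  have split : ∀ k l : Fin d,
      (U.filter fun v => v k = true).card
        = (U.filter fun v => v k = true ∧ v l = true).card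
          + (U.filter fun v => v k = true ∧ v l = false).card := by
    intro k l
    have h := Finset.card_filter_add_card_filter_not
      (s := U.filter fun v => v k = true) (p := fun v => v l = true)
    rw [Finset.filter_filter, Finset.filter_filter] at h
    rw [← h]
    congr 2
    ext v; simp [Bool.not_eq_true]
  have hAB : (U.filter fun v => v j = true ∧ v i = false).card
      < (U.filter fun v => v i = true ∧ v j = false).card := by
    have h1 := hcard i
    have h2 := hcard j
    rw [h1, h2, Nat.cast_lt, split i j, split j i] at hij
    have hcomm : (U.filter fun v => v j = true ∧ v i = true).card
        = (U.filter fun v => v i = true ∧ v j = true).card := by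
      congr 1; ext v; simp [and_comm]
    rw [hcomm] at hij
    exact Nat.lt_of_add_lt_add_left hij
  -- find v in A with sw v ∉ U
  have hex : ∃ v ∈ U, v i = true ∧ v j = false ∧ sw v ∉ U := by
    by_contra h
    push_neg at h
    have hinjf : Function.Injective sw := Function.LeftInverse.injective swinv
    have hmaps : ∀ v ∈ (U.filter fun v => v i = true ∧ v j = false),
        sw v ∈ (U.filter fun v => v j = true ∧ v i = false) := by
      intro v hv
      rw [Finset.mem_filter] at hv ⊢
      obtain ⟨hvU, hvi, hvj⟩ := hv
      refine ⟨h v hvU hvi hvj, ?_, ?_⟩ <;> simp [hsw, hij', Ne.symm hij', hvi, hvj]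
    exact absurd (Finset.card_le_card_of_injOn sw hmaps hinjf.injOn) (not_le.mpr hAB)
  obtain ⟨v, hvU, hvi, hvj, hswv⟩ := hex
  refine ⟨insert (sw v) (U.erase v), ?_⟩
  have hnm : sw v ∉ U.erase v := fun h => hswv (Finset.mem_of_mem_erase h)
  rw [Finset.sum_insert hnm, Finset.sum_erase_eq_sub hvU, ← hU]
  funext k
  simp only [Pi.add_apply, Pi.sub_apply, toVec, hsw]
  by_cases hki : k = i
  · subst hki; simp [hij', hvi, hvj]
  · by_cases hkj : k = j
    · subst hkj; simp [hki, hvi, hvj]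
      ring_nf
    · simp only [if_neg hki, if_neg hkj]
      ring
end

section
/- Suppose q = (q_1, …, q_d) ∈ S, b = (b_1, …, b_d) ∈ ℤ^d is an integer vector, and there exists a partition I ∪ J of {1, …, d} such that: (1) b_i ≤ b_j for every i ∈ I and j ∈ J; (2) q_i ≤ b_i for every i ∈ I and q_j ≥ b_j for every j ∈ J; (3) Σ_{i=1}^d b_i = Σ_{i=1}^d q_i. Then b ∈ S. -/
open Finset

open Finset

/-- integer degree -/
def degZ {d : ℕ} (U : Finset (Fin d → Bool)) (i : Fin d) : ℤ :=
  ((U.filter fun v => v i = true).card : ℤ)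

lemma sum_toVec_apply {d : ℕ} (U : Finset (Fin d → Bool)) (i : Fin d) :
    (∑ v ∈ U, (fun k => if v k then (1:ℝ) else 0)) i
      = ((U.filter fun v => v i = true).card : ℝ) := by
  rw [Finset.sum_apply]
  simp [Finset.sum_boole]

def swapFn {d : ℕ} (i j : Fin d) (v : Fin d → Bool) : Fin d → Bool :=
  fun k => if k = i then v j else if k = j then v i else v k

lemma swapFn_invol {d : ℕ} (i j : Fin d) (hij : i ≠ j) (v : Fin d → Bool) :
    swapFn i j (swapFn i j v) = v := by
  funext k
  simp only [swapFn]
  by_cases hki : k = i <;> by_cases hkj : k = j <;> simp [hki, hkj, hij, hij.symm]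

lemma swap_step {d : ℕ} (U : Finset (Fin d → Bool)) (i j : Fin d) (hij : i ≠ j)
    (h : degZ U i < degZ U j) :
    ∃ U' : Finset (Fin d → Bool),
      degZ U' i = degZ U i + 1 ∧ degZ U' j = degZ U j - 1 ∧
      ∀ k, k ≠ i → k ≠ j → degZ U' k = degZ U k := by
  classical
  set A := U.filter (fun v => v j = true ∧ v i = false) with hA
  set B := U.filter (fun v => v i = true ∧ v j = false) with hB
  clear_value A B
  -- card B < card A
  have hsplit : ∀ (p₁ p₂ : Fin d), (U.filter fun v => v p₁ = true).card
      = (U.filter fun v => v p₁ = true ∧ v p₂ = true).card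
        + (U.filter fun v => v p₁ = true ∧ v p₂ = false).card := by
    intro p₁ p₂
    have h1 := Finset.card_filter_add_card_filter_not
      (s := U.filter fun v => v p₁ = true) (p := fun v => v p₂ = true)
    rw [Finset.filter_filter, Finset.filter_filter] at h1
    have h2 : U.filter (fun v => v p₁ = true ∧ v p₂ = false)
        = U.filter (fun v => v p₁ = true ∧ ¬ v p₂ = true) := by
      apply Finset.filter_congr; intro v _; simp
    rw [h2, ← h1]
  have hdlt : (U.filter fun v => v i = true).card < (U.filter fun v => v j = true).card := by
    have := h; unfold degZ at this; exact_mod_cast this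
  have hC : (U.filter fun v => v j = true ∧ v i = true).card
      = (U.filter fun v => v i = true ∧ v j = true).card := by
    congr 1
    apply Finset.filter_congr; intro v _; constructor <;> (intro hv; exact ⟨hv.2, hv.1⟩)
  have hBA : B.card < A.card := by
    have h1 := hsplit j i
    have h2 := hsplit i j
    rw [← hA] at h1; rw [← hB] at h2
    linarith
  have hinj : Function.Injective (swapFn i j) :=
    Function.Involutive.injective (swapFn_invol i j hij)
  have hex : ∃ v ∈ A, swapFn i j v ∉ U := by
    by_contra hc
    push_neg at hc
    have himg : A.image (swapFn i j) ⊆ B := by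
      intro w hw
      rw [Finset.mem_image] at hw
      obtain ⟨v, hvA, rfl⟩ := hw
      have hv := hvA
      rw [hA, Finset.mem_filter] at hv
      rw [hB, Finset.mem_filter]
      refine ⟨hc v hvA, ?_, ?_⟩
      · simp [swapFn, hv.2.1]
      · simp [swapFn, hij.symm, hv.2.2]
    have : A.card ≤ B.card := by
      calc A.card = (A.image (swapFn i j)).card :=
            (Finset.card_image_of_injective _ hinj).symm
        _ ≤ B.card := Finset.card_le_card himg
    exact absurd this (not_le.mpr hBA)
  obtain ⟨v, hvA, hsv⟩ := hex
  set w := swapFn i j v with hw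
  clear_value w
  rw [hA, Finset.mem_filter] at hvA
  obtain ⟨hvU, hvj, hvi⟩ := hvA
  have hwi : w i = true := by simp [hw, swapFn, hvj]
  have hwj : w j = false := by simp [hw, swapFn, hij.symm, hvi]
  have hwv : w ≠ v := by
    intro hh
    rw [hh, hvi] at hwi
    exact Bool.false_ne_true hwi
  have hwU : w ∉ U.erase v := fun hh => hsv (Finset.mem_of_mem_erase hh)
  have main : ∀ k, ((insert w (U.erase v)).filter fun u => u k = true).card
      = (U.filter fun u => u k = true).card
        + (if w k = true then 1 else 0) - (if v k = true then 1 else 0) := by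
    intro k
    rw [Finset.filter_insert, Finset.filter_erase]
    by_cases hwk : w k = true
    · rw [if_pos hwk, Finset.card_insert_of_notMem
        (fun hh => hsv (Finset.mem_of_mem_filter _ (Finset.mem_of_mem_erase hh)))]
      by_cases hvk : v k = true
      · have hm : v ∈ U.filter (fun u => u k = true) := Finset.mem_filter.mpr ⟨hvU, hvk⟩
        rw [Finset.card_erase_of_mem hm]
        have : 1 ≤ (U.filter fun u => u k = true).card := Finset.card_pos.mpr ⟨v, hm⟩
        simp only [hwk, hvk, if_true]
        rw [Nat.add_sub_cancel, Nat.sub_add_cancel this]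
      · have hvnot : v ∉ U.filter (fun u => u k = true) :=
          fun hh => hvk (Finset.mem_filter.mp hh).2
        rw [Finset.erase_eq_of_notMem hvnot]
        simp [hwk, hvk]
    · rw [if_neg hwk]
      by_cases hvk : v k = true
      · have hm : v ∈ U.filter (fun u => u k = true) := Finset.mem_filter.mpr ⟨hvU, hvk⟩
        rw [Finset.card_erase_of_mem hm]
        simp [hwk, hvk]
      · have hvnot : v ∉ U.filter (fun u => u k = true) :=
          fun hh => hvk (Finset.mem_filter.mp hh).2
        rw [Finset.erase_eq_of_notMem hvnot]
        simp [hwk, hvk]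
  refine ⟨insert w (U.erase v), ?_, ?_, ?_⟩
  · unfold degZ
    rw [main i]
    simp only [hwi, hvi, if_true]
    norm_num
  · unfold degZ
    have hm : v ∈ U.filter (fun u => u j = true) := Finset.mem_filter.mpr ⟨hvU, hvj⟩
    have hpos : 1 ≤ (U.filter fun u => u j = true).card := Finset.card_pos.mpr ⟨v, hm⟩
    rw [main j]
    simp only [hwj, hvj, if_true, Bool.false_eq_true, if_false, add_zero]
    rw [Nat.cast_sub hpos]
    simp
  · intro k hki hkj
    unfold degZ
    have hwvk : w k = v k := by simp [hw, swapFn, hki, hkj]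
    rw [main k, hwvk]
    by_cases hvk : v k = true
    · have hm : v ∈ U.filter (fun u => u k = true) := Finset.mem_filter.mpr ⟨hvU, hvk⟩
      have hpos : 1 ≤ (U.filter fun u => u k = true).card := Finset.card_pos.mpr ⟨v, hm⟩
      simp [hvk]
    · simp [hvk]

lemma key {d : ℕ} : ∀ (n : ℕ) (U : Finset (Fin d → Bool)) (b : Fin d → ℤ)
    (I J : Finset (Fin d)),
    Disjoint I J → I ∪ J = Finset.univ →
    (∀ i ∈ I, ∀ j ∈ J, b i ≤ b j) →
    (∀ i ∈ I, degZ U i ≤ b i) →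
    (∀ j ∈ J, b j ≤ degZ U j) →
    (∑ i, b i = ∑ i, degZ U i) →
    (∑ i ∈ I, (b i - degZ U i)) = (n : ℤ) →
    ∃ U' : Finset (Fin d → Bool), ∀ i, degZ U' i = b i := by
  intro n
  induction n with
  | zero =>
    intro U b I J hdisj hunion h1 h2I h2J h3 hn
    refine ⟨U, ?_⟩
    have hI0 : ∀ i ∈ I, b i - degZ U i = 0 :=
      (Finset.sum_eq_zero_iff_of_nonneg
        (fun i hi => sub_nonneg.mpr (h2I i hi))).mp (by exact_mod_cast hn)
    have hall : ∑ i ∈ I, (b i - degZ U i) + ∑ i ∈ J, (b i - degZ U i) = 0 := by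
      rw [← Finset.sum_union hdisj, hunion, Finset.sum_sub_distrib, h3, sub_self]
    have hsumJ : ∑ i ∈ J, (b i - degZ U i) = 0 := by
      rw [hn] at hall; simpa using hall
    have hJ0 : ∀ j ∈ J, b j - degZ U j = 0 :=
      (Finset.sum_eq_zero_iff_of_nonpos
        (fun j hj => sub_nonpos.mpr (h2J j hj))).mp hsumJ
    intro i
    have : i ∈ I ∪ J := hunion ▸ Finset.mem_univ i
    rcases Finset.mem_union.mp this with hi | hi
    · have := hI0 i hi; linarith
    · have := hJ0 i hi; linarith
  | succ n ih =>
    intro U b I J hdisj hunion h1 h2I h2J h3 hn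
    have hall : ∑ i ∈ I, (b i - degZ U i) + ∑ i ∈ J, (b i - degZ U i) = 0 := by
      rw [← Finset.sum_union hdisj, hunion, Finset.sum_sub_distrib, h3, sub_self]
    have hIex : ∃ i₀ ∈ I, degZ U i₀ < b i₀ := by
      by_contra hc
      push_neg at hc
      have hle : ∑ i ∈ I, (b i - degZ U i) ≤ 0 :=
        Finset.sum_nonpos (fun i hi => sub_nonpos.mpr (hc i hi))
      rw [hn] at hle
      have : ((n : ℤ) + 1) ≤ 0 := by exact_mod_cast hle
      omega
    have hJex : ∃ j₀ ∈ J, b j₀ < degZ U j₀ := by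
      by_contra hc
      push_neg at hc
      have hle : 0 ≤ ∑ i ∈ J, (b i - degZ U i) :=
        Finset.sum_nonneg (fun j hj => sub_nonneg.mpr (hc j hj))
      rw [hn] at hall
      have : ((n : ℤ) + 1) ≤ 0 := by push_cast at hall ⊢; linarith
      omega
    obtain ⟨i₀, hi₀I, hi₀⟩ := hIex
    obtain ⟨j₀, hj₀J, hj₀⟩ := hJex
    have hne : i₀ ≠ j₀ := fun hh => (Finset.disjoint_left.mp hdisj hi₀I (hh ▸ hj₀J))
    have hlt : degZ U i₀ < degZ U j₀ := by
      have hb := h1 i₀ hi₀I j₀ hj₀J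
      linarith
    obtain ⟨U', hU'i, hU'j, hU'k⟩ := swap_step U i₀ j₀ hne hlt
    have hsum' : ∑ i, degZ U' i = ∑ i, degZ U i := by
      have hz : ∀ x ∈ (Finset.univ : Finset (Fin d)),
          x ∉ ({i₀, j₀} : Finset (Fin d)) → degZ U' x - degZ U x = 0 := by
        intro x _ hx
        rw [Finset.mem_insert, Finset.mem_singleton] at hx
        push_neg at hx
        rw [hU'k x hx.1 hx.2]; ring
      have h0 : ∑ x ∈ ({i₀, j₀} : Finset (Fin d)), (degZ U' x - degZ U x)
          = ∑ x, (degZ U' x - degZ U x) :=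
        Finset.sum_subset (Finset.subset_univ _) hz
      rw [Finset.sum_pair hne, hU'i, hU'j] at h0
      have h0' : ∑ x, (degZ U' x - degZ U x) = 0 := by rw [← h0]; ring
      rw [Finset.sum_sub_distrib] at h0'
      linarith
    have hI1 : ∑ x ∈ I, degZ U' x - ∑ x ∈ I, degZ U x = 1 := by
      have hz : ∀ x ∈ I, x ∉ ({i₀} : Finset (Fin d)) → degZ U' x - degZ U x = 0 := by
        intro x hx hxn
        have hx1 : x ≠ i₀ := by simpa using hxn
        have hx2 : x ≠ j₀ := fun hh => (Finset.disjoint_left.mp hdisj hx (hh ▸ hj₀J))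
        rw [hU'k x hx1 hx2]; ring
      have h0 : ∑ x ∈ ({i₀} : Finset (Fin d)), (degZ U' x - degZ U x)
          = ∑ x ∈ I, (degZ U' x - degZ U x) :=
        Finset.sum_subset (Finset.singleton_subset_iff.mpr hi₀I) hz
      rw [Finset.sum_singleton, hU'i] at h0
      rw [← Finset.sum_sub_distrib, ← h0]
      ring
    apply ih U' b I J hdisj hunion h1
    · intro i hi
      by_cases hii : i = i₀
      · subst hii
        rw [hU'i]
        exact Int.add_one_le_iff.mpr hi₀
      · have hij : i ≠ j₀ := fun hh => (Finset.disjoint_left.mp hdisj hi (hh ▸ hj₀J))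
        rw [hU'k i hii hij]
        exact h2I i hi
    · intro j hj
      by_cases hjj : j = j₀
      · subst hjj
        rw [hU'j]
        exact Int.le_sub_one_iff.mpr hj₀
      · have hji : j ≠ i₀ := fun hh => (Finset.disjoint_left.mp hdisj hi₀I (hh ▸ hj)).elim
        rw [hU'k j hji hjj]
        exact h2J j hj
    · rw [h3, hsum']
    · rw [Finset.sum_sub_distrib] at hn ⊢
      push_cast at hn ⊢
      linarith
lemma sum_toVec_apply' {d : ℕ} (U : Finset (Fin d → Bool)) (i : Fin d) :
    (∑ v ∈ U, toVec v) i = ((U.filter fun v => v i = true).card : ℝ) := by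
  rw [Finset.sum_apply]
  simp [toVec, Finset.sum_boole]

/-- Lemma (simple): if `q ∈ S`, `b` is an integer vector, and there is a partition
`I ∪ J` of the coordinates with (1) `bᵢ ≤ bⱼ` for `i ∈ I`, `j ∈ J`;
(2) `qᵢ ≤ bᵢ` on `I` and `qⱼ ≥ bⱼ` on `J`; (3) `∑ b = ∑ q`, then `b ∈ S`. -/
theorem lemma_simple (d : ℕ) (q : Fin d → ℝ) (hq : q ∈ degSeqs d)
    (b : Fin d → ℤ) (I J : Finset (Fin d))
    (hdisj : Disjoint I J) (hunion : I ∪ J = Finset.univ)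
    (h1 : ∀ i ∈ I, ∀ j ∈ J, b i ≤ b j)
    (h2I : ∀ i ∈ I, q i ≤ (b i : ℝ))
    (h2J : ∀ j ∈ J, (b j : ℝ) ≤ q j)
    (h3 : ∑ i, (b i : ℝ) = ∑ i, q i) :
    (fun i => (b i : ℝ)) ∈ degSeqs d := by
  obtain ⟨U, hU⟩ := hq
  have hqdeg : ∀ i, q i = ((degZ U i : ℤ) : ℝ) := by
    intro i
    rw [hU, sum_toVec_apply']
    simp [degZ]
  have h2I' : ∀ i ∈ I, degZ U i ≤ b i := by
    intro i hi
    have := h2I i hi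
    rw [hqdeg i] at this
    exact_mod_cast this
  have h2J' : ∀ j ∈ J, b j ≤ degZ U j := by
    intro j hj
    have := h2J j hj
    rw [hqdeg j] at this
    exact_mod_cast this
  have h3' : ∑ i, b i = ∑ i, degZ U i := by
    have hc : ((∑ i, b i : ℤ) : ℝ) = ((∑ i, degZ U i : ℤ) : ℝ) := by
      push_cast
      rw [h3]
      refine Finset.sum_congr rfl (fun i _ => ?_)
      rw [hqdeg i]
    exact_mod_cast hc
  have hnn : 0 ≤ ∑ i ∈ I, (b i - degZ U i) :=
    Finset.sum_nonneg (fun i hi => sub_nonneg.mpr (h2I' i hi))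
  obtain ⟨n, hn⟩ : ∃ n : ℕ, ∑ i ∈ I, (b i - degZ U i) = (n : ℤ) :=
    ⟨(∑ i ∈ I, (b i - degZ U i)).toNat, (Int.toNat_of_nonneg hnn).symm⟩
  obtain ⟨U', hU'⟩ := key n U b I J hdisj hunion h1 h2I' h2J' h3' hn
  refine ⟨U', ?_⟩
  funext i
  rw [sum_toVec_apply', ← hU' i]
  simp [degZ]
end

section
/- Assume P = (p_1, …, p_d) ∈ S with Σ_{i=1}^d p_i > d+1, and let 0 ≤ r < d+1 be an integer. Then there exists Q = (q_1, …, q_d) ∈ S such that q_i ≤ p_i for every 1 ≤ i ≤ d and Σ_{i=1}^d p_i = r + Σ_{i=1}^d q_i. -/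
open Finset

def wt {n : ℕ} (v : Fin n → Bool) : ℕ := (Finset.univ.filter fun i => v i = true).card

lemma sum_toVec {n : ℕ} (v : Fin n → Bool) : ∑ i, toVec v i = (wt v : ℝ) := by
  simp [toVec, wt, Finset.sum_boole]

lemma toVec_nonneg {n : ℕ} (v : Fin n → Bool) (i : Fin n) : 0 ≤ toVec v i := by
  unfold toVec; positivity

lemma step {n : ℕ} (U : Finset (Fin n → Bool)) (h : 1 ≤ ∑ v ∈ U, wt v) :
    ∃ U' : Finset (Fin n → Bool),
      (∀ i, (∑ v ∈ U', toVec v i) ≤ ∑ v ∈ U, toVec v i) ∧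
      ∑ v ∈ U', wt v = (∑ v ∈ U, wt v) - 1 := by
  classical
  set T := U.filter (fun v => 1 ≤ wt v) with hT
  have hTne : T.Nonempty := by
    by_contra hne
    rw [Finset.not_nonempty_iff_eq_empty] at hne
    have : ∀ v ∈ U, wt v = 0 := by
      intro v hv
      by_contra h0
      have : v ∈ T := by
        rw [hT, Finset.mem_filter]; exact ⟨hv, Nat.one_le_iff_ne_zero.2 h0⟩
      simp [hne] at this
    have : ∑ v ∈ U, wt v = 0 := Finset.sum_eq_zero this
    omega
  obtain ⟨v, hvT, hmin⟩ := Finset.exists_min_image T wt hTne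
  have hvU : v ∈ U := (Finset.mem_filter.1 hvT).1
  have hvw : 1 ≤ wt v := (Finset.mem_filter.1 hvT).2
  by_cases hw1 : wt v = 1
  · refine ⟨U.erase v, ?_, ?_⟩
    · intro i
      exact Finset.sum_le_sum_of_subset_of_nonneg (Finset.erase_subset _ _)
        (fun w hw _ => toVec_nonneg w i)
    · have := Finset.add_sum_erase U wt hvU
      omega
  · -- wt v ≥ 2
    have hw2 : 2 ≤ wt v := by omega
    have : (Finset.univ.filter fun i => v i = true).Nonempty := by
      rw [← Finset.card_pos]; unfold wt at hvw; omega
    obtain ⟨i, hi⟩ := this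
    have hvi : v i = true := (Finset.mem_filter.1 hi).2
    set v' := Function.update v i false with hv'
    have hfilter : (Finset.univ.filter fun j => v' j = true)
        = (Finset.univ.filter fun j => v j = true).erase i := by
      ext j
      by_cases hji : j = i <;> simp [hv', Function.update, hji, hvi]
    have hwv' : wt v' = wt v - 1 := by
      unfold wt
      rw [hfilter, Finset.card_erase_of_mem hi]
    have hv'notU : v' ∉ U := by
      intro hmem
      have : v' ∈ T := by
        rw [hT, Finset.mem_filter]
        exact ⟨hmem, by omega⟩
      have := hmin v' this
      omega
    refine ⟨insert v' (U.erase v), ?_, ?_⟩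
    · intro j
      rw [Finset.sum_insert (by simp [hv'notU, Finset.mem_erase])]
      have h1 : toVec v' j ≤ toVec v j := by
        by_cases hji : j = i <;> simp [toVec, hv', Function.update, hji, hvi, toVec_nonneg]
      calc toVec v' j + ∑ w ∈ U.erase v, toVec w j
          ≤ toVec v j + ∑ w ∈ U.erase v, toVec w j := by linarith
        _ = ∑ w ∈ U, toVec w j := Finset.add_sum_erase U (fun w => toVec w j) hvU
    · rw [Finset.sum_insert (by simp [hv'notU, Finset.mem_erase]), hwv']
      have := Finset.add_sum_erase U wt hvU
      omega

lemma iter {n : ℕ} (U : Finset (Fin n → Bool)) (k : ℕ) (h : k + 1 ≤ ∑ v ∈ U, wt v) :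
    ∃ U' : Finset (Fin n → Bool),
      (∀ i, (∑ v ∈ U', toVec v i) ≤ ∑ v ∈ U, toVec v i) ∧
      ∑ v ∈ U', wt v = (∑ v ∈ U, wt v) - k := by
  induction k with
  | zero => exact ⟨U, fun i => le_rfl, by omega⟩
  | succ k ih =>
    obtain ⟨U', hle, hsum⟩ := ih (by omega)
    obtain ⟨U'', hle', hsum'⟩ := step U' (by omega)
    exact ⟨U'', fun i => (hle' i).trans (hle i), by omega⟩

/-- Claim (modulo): if `P ∈ S` with `∑ pᵢ > d + 1` and `0 ≤ r < d + 1` is an integer, then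
there is `Q ∈ S` with `qᵢ ≤ pᵢ` for all `i` and `∑ pᵢ = r + ∑ qᵢ`. -/
theorem claim_modulo (d : ℕ) (P : Fin d → ℝ) (hP : P ∈ degSeqs d)
    (hsum : (d : ℝ) + 1 < ∑ i, P i) (r : ℕ) (hr : r < d + 1) :
    ∃ Q : Fin d → ℝ, Q ∈ degSeqs d ∧ (∀ i, Q i ≤ P i) ∧
      ∑ i, P i = (r : ℝ) + ∑ i, Q i := by
  obtain ⟨U, hU⟩ := hP
  have hPsum : ∑ i, P i = ((∑ v ∈ U, wt v : ℕ) : ℝ) := by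
    rw [hU]
    simp only [Finset.sum_apply]
    rw [Finset.sum_comm]
    push_cast
    exact Finset.sum_congr rfl fun v _ => sum_toVec v
  set S0 := ∑ v ∈ U, wt v with hS0
  have hS0big : d + 2 ≤ S0 := by
    rw [hPsum] at hsum
    have h2 : (d : ℝ) + 1 < (S0 : ℝ) := hsum
    have h3 : d + 1 < S0 := by exact_mod_cast h2
    omega
  have hr1 : r + 1 ≤ S0 := by omega
  obtain ⟨U', hle, hsumU'⟩ := iter U r hr1
  refine ⟨∑ v ∈ U', toVec v, ⟨U', rfl⟩, ?_, ?_⟩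
  · intro i
    rw [hU]
    simpa using hle i
  · have hQsum : ∑ i, (∑ v ∈ U', toVec v) i = ((S0 - r : ℕ) : ℝ) := by
      rw [← hsumU']
      simp only [Finset.sum_apply]
      rw [Finset.sum_comm]
      push_cast
      exact Finset.sum_congr rfl fun v _ => sum_toVec v
    rw [hPsum, hQsum, Nat.cast_sub (by omega)]
    ring
end

section
/- Let d = C(8,2) + C(8,4) = 98 and let B be the 8 × d matrix whose first C(8,2) columns are all vectors in {0,1}^8 with exactly two coordinates equal to one and whose remaining C(8,4) columns are all vectors in {0,1}^8 with exactly four coordinates equal to one. Let v_1, …, v_8 ∈ {0,1}^d be the rows of B. Then the set of vectors of {0,1}^d lying in the real linear span of {v_1, …, v_8} is exactly {0, v_1, v_2, …, v_8}. In particular, any linear combination λ_1 v_1 + ⋯ + λ_8 v_8 with real coefficients that lies in {0,1}^d is either the zero vector or equals one of v_1, …, v_8. -/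
open Finset

/-- The index set of the columns of the matrix `B`: all 0/1 vectors of length 8 with exactly
two or exactly four ones.  There are `C(8,2) + C(8,4) = 98` such columns, so this index set
plays the role of `{1, …, d}` for `d = 98` (the order of the columns is immaterial). -/
def ColIdx : Type :=
  {c : Fin 8 → Bool // (Finset.univ.filter fun k => c k = true).card = 2 ∨
    (Finset.univ.filter fun k => c k = true).card = 4}

instance : Fintype ColIdx := by unfold ColIdx; infer_instance

/-- The `k`-th row of the matrix `B`, as a 0/1 vector in `ℝ^d` (`d = 98`). -/
noncomputable def rowVec (k : Fin 8) : ColIdx → ℝ :=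
  fun c => if c.1 k then 1 else 0

lemma key_lam (lam : Fin 8 → ℝ)
    (H : ∀ S : Finset (Fin 8), S.card = 2 ∨ S.card = 4 →
      (∑ k ∈ S, lam k) = 0 ∨ (∑ k ∈ S, lam k) = 1) :
    (∀ k, lam k = 0) ∨ ∃ j, lam j = 1 ∧ ∀ k, k ≠ j → lam k = 0 := by
  have hp : ∀ i j : Fin 8, i ≠ j → lam i + lam j = 0 ∨ lam i + lam j = 1 := by
    intro i j hij
    have h := H {i, j} (Or.inl (by rw [Finset.card_insert_of_notMem (by simp [hij])]; simp))
    rwa [Finset.sum_pair hij] at h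
  -- helper: if lam b = lam a + 1 with a ≠ b, then conclusion
  have step : ∀ a b : Fin 8, a ≠ b → lam b = lam a + 1 →
      ∃ j, lam j = 1 ∧ ∀ k, k ≠ j → lam k = 0 := by
    intro a b hab hba
    have hout : ∀ m, m ≠ a → m ≠ b → lam m = -lam a := by
      intro m hma hmb
      have h1 := hp a m (fun h => hma h.symm)
      have h2 := hp b m (fun h => hmb h.symm)
      rw [hba] at h2
      rcases h1 with h1 | h1 <;> rcases h2 with h2 | h2 <;> linarith
    -- pick 4 elements outside {a, b}
    have hT : (Finset.univ \ {a, b} : Finset (Fin 8)).card = 6 := by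
      rw [Finset.card_sdiff_of_subset (Finset.subset_univ _)]
      rw [Finset.card_insert_of_notMem (by simp [hab])]
      simp
    obtain ⟨S, hS, hScard⟩ := Finset.exists_subset_card_eq
      (show 4 ≤ (Finset.univ \ {a, b} : Finset (Fin 8)).card by omega)
    obtain ⟨P, hP, hPcard⟩ := Finset.exists_subset_card_eq (show 2 ≤ S.card by omega)
    have hSval : ∀ m ∈ S, lam m = -lam a := by
      intro m hm
      have := hS hm
      simp only [Finset.mem_sdiff, Finset.mem_insert, Finset.mem_singleton] at this
      exact hout m (fun h => this.2 (Or.inl h)) (fun h => this.2 (Or.inr h))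
    have hS4 : (∑ k ∈ S, lam k) = -(4 * lam a) := by
      rw [Finset.sum_congr rfl hSval, Finset.sum_const, hScard]; push_cast [nsmul_eq_mul]; ring
    have hP2 : (∑ k ∈ P, lam k) = -(2 * lam a) := by
      rw [Finset.sum_congr rfl (fun m hm => hSval m (hP hm)), Finset.sum_const, hPcard]
      push_cast [nsmul_eq_mul]; ring
    have h4 := H S (Or.inr hScard)
    have h2 := H P (Or.inl hPcard)
    rw [hS4] at h4; rw [hP2] at h2
    have ha0 : lam a = 0 := by rcases h4 with h4 | h4 <;> rcases h2 with h2 | h2 <;> linarith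
    refine ⟨b, by rw [hba, ha0]; ring, ?_⟩
    intro k hk
    by_cases hka : k = a
    · rw [hka, ha0]
    · rw [hout k hka hk, ha0]; ring
  by_cases hall : ∀ k, lam k = lam 0
  · left
    have h2 := hp 0 1 (by decide)
    have h4 := H ({0, 1, 2, 3} : Finset (Fin 8)) (Or.inr (by decide))
    rw [Finset.sum_congr rfl (fun m _ => hall m)] at h4
    rw [hall 1] at h2
    rw [Finset.sum_const] at h4
    have hc : ({0, 1, 2, 3} : Finset (Fin 8)).card = 4 := by decide
    rw [hc] at h4
    have h0 : lam 0 = 0 := by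
      rcases h2 with h2 | h2 <;> rcases h4 with h4 | h4 <;>
        simp only [nsmul_eq_mul, Nat.cast_ofNat] at h4 <;> linarith
    intro k; rw [hall k, h0]
  · push_neg at hall
    obtain ⟨i, hi⟩ := hall
    have hi0 : i ≠ 0 := fun h => hi (by rw [h])
    -- pick k outside {i, 0}
    have hT : (Finset.univ \ {i, (0 : Fin 8)} : Finset (Fin 8)).card = 6 := by
      rw [Finset.card_sdiff_of_subset (Finset.subset_univ _)]
      rw [Finset.card_insert_of_notMem (by simp [hi0])]
      simp
    have hne : (Finset.univ \ {i, (0 : Fin 8)} : Finset (Fin 8)).Nonempty := by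
      rw [← Finset.card_pos, hT]; norm_num
    obtain ⟨m, hm⟩ := hne
    simp only [Finset.mem_sdiff, Finset.mem_insert, Finset.mem_singleton] at hm
    have hmi : m ≠ i := fun h => hm.2 (Or.inl h)
    have hm0 : m ≠ 0 := fun h => hm.2 (Or.inr h)
    have h1 := hp i m (fun h => hmi h.symm)
    have h2 := hp 0 m hm0.symm
    right
    rcases h1 with h1 | h1 <;> rcases h2 with h2 | h2
    · exact absurd (by linarith : lam i = lam 0) hi
    · exact step i 0 hi0 (by linarith)
    · exact step 0 i hi0.symm (by linarith)
    · exact absurd (by linarith : lam i = lam 0) hi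


/-- The number of columns is `C(8,2) + C(8,4) = 98`, and the set of 0/1 vectors of `ℝ^98`
lying in the real linear span of the rows `v₁, …, v₈` of `B` is exactly
`{0, v₁, …, v₈}`. -/
theorem cube_points_in_span_of_rows :
    Fintype.card ColIdx = Nat.choose 8 2 + Nat.choose 8 4 ∧
    {x : ColIdx → ℝ | (∀ c, x c = 0 ∨ x c = 1) ∧
        x ∈ Submodule.span ℝ (Set.range rowVec)} =
      insert (0 : ColIdx → ℝ) (Set.range rowVec) := by
  constructor
  · decide
  ext x
  simp only [Set.mem_setOf_eq, Set.mem_insert_iff, Set.mem_range]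
  constructor
  · rintro ⟨h01, hspan⟩
    rw [Finsupp.mem_span_range_iff_exists_finsupp] at hspan
    obtain ⟨lam0, hlam⟩ := hspan
    set lam : Fin 8 → ℝ := fun k => lam0 k with hlamdef
    have hx : ∀ c : ColIdx, x c = ∑ k ∈ Finset.univ.filter (fun k => c.1 k = true), lam k := by
      intro c
      rw [← hlam]
      rw [Finsupp.sum_fintype _ _ (by intro i; simp)]
      rw [Finset.sum_apply]
      rw [Finset.sum_filter]
      apply Finset.sum_congr rfl
      intro k _
      simp only [Pi.smul_apply, rowVec, smul_eq_mul]
      by_cases h : c.1 k <;> simp [h, hlamdef]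
    have H : ∀ S : Finset (Fin 8), S.card = 2 ∨ S.card = 4 →
        (∑ k ∈ S, lam k) = 0 ∨ (∑ k ∈ S, lam k) = 1 := by
      intro S hS
      have hfil : (Finset.univ.filter fun k => (decide (k ∈ S)) = true) = S := by
        ext k; simp
      have h := h01 ⟨fun k => decide (k ∈ S), by rw [hfil]; exact hS⟩
      erw [hx] at h
      rwa [show (Finset.univ.filter fun k =>
        ((⟨fun k => decide (k ∈ S), by rw [hfil]; exact hS⟩ : ColIdx).1 k) = true) = S
        from hfil] at h
    rcases key_lam lam H with h0 | ⟨j, hj1, hj0⟩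
    · left
      funext c
      rw [hx c, Finset.sum_eq_zero (fun k _ => h0 k)]
      simp
    · right
      refine ⟨j, ?_⟩
      funext c
      rw [hx c]
      have hval : ∀ k, lam k = if k = j then 1 else 0 := by
        intro k
        by_cases h : k = j
        · rw [h, hj1]; simp
        · rw [hj0 k h]; simp [h]
      rw [Finset.sum_congr rfl (fun k _ => hval k), Finset.sum_ite_eq']
      simp only [Finset.mem_filter, Finset.mem_univ, true_and, rowVec]
  · rintro (rfl | ⟨k, rfl⟩)
    · exact ⟨fun c => Or.inl rfl, Submodule.zero_mem _⟩
    · refine ⟨fun c => ?_, Submodule.subset_span (Set.mem_range_self k)⟩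
      by_cases h : c.1 k
      · right; simp [rowVec, h]
      · left; simp [rowVec, h]
end

section
/- Fix d ≥ 1 and let w := (−3, 1, 1, …, 1) ∈ ℝ^{d+1}. Let A_+ := {v ∈ {0,1}^{d+1} : ⟨v, w⟩ > 0} and z := Σ_{v ∈ A_+} v. Then for every b ∈ ℕ^d whose coordinate sum ‖b‖₁ is divisible by 3, the following are equivalent: (i) b is the degree sequence of a 3-uniform hypergraph on d vertices, i.e. b is the sum of a set of pairwise distinct vectors in {0,1}^d each having exactly three coordinates equal to one; (ii) the integer point z + (‖b‖₁/3, b_1, …, b_d) ∈ ℤ^{d+1} is a degree sequence (belongs to S in dimension d+1). -/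
open Finset

/-- The vector `w = (-3, 1, …, 1) ∈ ℝ^(d+1)` (it has integer entries). -/
def wVec (d : ℕ) : Fin (d + 1) → ℤ :=
  fun i => if i = 0 then -3 else 1

/-- `z = ∑_{v ∈ A₊} v`, where `A₊ = {v ∈ {0,1}^(d+1) : ⟨v, w⟩ > 0}`. -/
noncomputable def zVec (d : ℕ) : Fin (d + 1) → ℝ :=
  ∑ v ∈ Finset.univ.filter
      (fun v : Fin (d + 1) → Bool => 0 < ∑ i, wVec d i * (if v i then 1 else 0)),
    toVec v

def ipZ (d : ℕ) (v : Fin (d + 1) → Bool) : ℤ :=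
  ∑ i, wVec d i * (if v i then 1 else 0)

noncomputable def Apos (d : ℕ) : Finset (Fin (d + 1) → Bool) :=
  Finset.univ.filter (fun v => 0 < ipZ d v)

lemma zVec_eq (d : ℕ) : zVec d = ∑ v ∈ Apos d, toVec v := rfl

lemma ipZ_eq (d : ℕ) (v : Fin (d + 1) → Bool) :
    ipZ d v = (if v 0 then -3 else 0) +
      ((Finset.univ.filter fun i : Fin d => v i.succ = true).card : ℤ) := by
  rw [ipZ, Fin.sum_univ_succ, ← Finset.sum_boole]
  have h0 : wVec d 0 = -3 := rfl
  have hs : ∀ i : Fin d, wVec d i.succ = 1 := fun i => by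
    simp [wVec, Fin.succ_ne_zero]
  simp [h0, hs, mul_ite]

lemma ipZ_cast (d : ℕ) (v : Fin (d + 1) → Bool) :
    ((ipZ d v : ℤ) : ℝ) = ∑ j, (wVec d j : ℝ) * toVec v j := by
  rw [ipZ]
  push_cast
  refine Finset.sum_congr rfl fun j _ => ?_
  by_cases h : v j <;> simp [toVec, h]

lemma toVec_cons_true (d : ℕ) (v : Fin d → Bool) :
    toVec (Fin.cons true v : Fin (d + 1) → Bool) = Fin.cons 1 (toVec v) := by
  funext j
  refine Fin.cases ?_ (fun i => ?_) j <;> simp [toVec]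

lemma ipZ_cons_true (d : ℕ) (v : Fin d → Bool)
    (hv : (Finset.univ.filter fun i => v i = true).card = 3) :
    ipZ d (Fin.cons true v) = 0 := by
  rw [ipZ_eq]
  simp only [Fin.cons_zero, Fin.cons_succ, if_true]
  rw [hv]
  norm_num

lemma functional_sum (d : ℕ) (U : Finset (Fin (d + 1) → Bool)) :
    ∑ j, (wVec d j : ℝ) * ∑ v ∈ U, toVec v j = ((∑ v ∈ U, ipZ d v : ℤ) : ℝ) := by
  rw [Int.cast_sum]
  simp_rw [ipZ_cast, Finset.mul_sum]
  rw [Finset.sum_comm]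

open Finset

/-- A vector `b ∈ ℕ^d` with `3 ∣ ‖b‖₁` is the degree sequence of a 3-uniform hypergraph
if and only if `z + (‖b‖₁/3, b)` is a degree sequence in dimension `d+1`. -/
theorem three_uniform_iff_shifted_degSeq (d : ℕ) (hd : 1 ≤ d) (b : Fin d → ℕ)
    (hb : 3 ∣ ∑ i, b i) :
    (∃ U : Finset (Fin d → Bool),
        (∀ v ∈ U, (Finset.univ.filter fun i => v i = true).card = 3) ∧
        (fun i => (b i : ℝ)) = ∑ v ∈ U, toVec v) ↔
    (fun j => zVec d j +
        (Fin.cons ((∑ i, (b i : ℝ)) / 3) (fun i => (b i : ℝ)) : Fin (d + 1) → ℝ) j)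
      ∈ degSeqs (d + 1) := by
  classical
  constructor
  · rintro ⟨U, hcard, hsum⟩
    have hg : Function.Injective (fun v : Fin d → Bool => (Fin.cons true v : Fin (d + 1) → Bool)) := by
      intro a b h
      funext i
      simpa using congrFun h i.succ
    have hdisj : Disjoint (Apos d) (U.image fun v => (Fin.cons true v : Fin (d + 1) → Bool)) := by
      rw [Finset.disjoint_right]
      rintro x hx hxA
      simp only [Finset.mem_image] at hx
      obtain ⟨v, hv, rfl⟩ := hx
      have h0 := ipZ_cons_true d v (hcard v hv)
      rw [Apos, Finset.mem_filter] at hxA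
      omega
    refine ⟨Apos d ∪ U.image fun v => Fin.cons true v, ?_⟩
    have hm : ∑ i, (b i : ℝ) = 3 * U.card := by
      have h1 : ∀ i, (b i : ℝ) = ∑ v ∈ U, toVec v i := by
        intro i
        have := congrFun hsum i
        simpa [Finset.sum_apply] using this
      calc ∑ i, (b i : ℝ) = ∑ i, ∑ v ∈ U, toVec v i := by
            exact Finset.sum_congr rfl fun i _ => h1 i
        _ = ∑ v ∈ U, ∑ i, toVec v i := Finset.sum_comm
        _ = ∑ v ∈ U, (3 : ℝ) := by
            refine Finset.sum_congr rfl fun v hv => ?_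
            have : ∑ i, toVec v i = ((Finset.univ.filter fun i => v i = true).card : ℝ) := by
              simp [toVec, Finset.sum_boole]
            rw [this, hcard v hv]
            norm_num
        _ = 3 * U.card := by rw [Finset.sum_const]; ring
    funext j
    rw [Finset.sum_union hdisj, Finset.sum_image (fun a _ c _ h => hg h)]
    simp only [Pi.add_apply, Finset.sum_apply]
    have hz : zVec d j = ∑ v ∈ Apos d, toVec v j := by
      rw [zVec_eq]; simp [Finset.sum_apply]
    rw [hz]
    refine congrArg (fun x => _ + x) ?_
    simp_rw [toVec_cons_true]
    refine Fin.cases ?_ (fun i => ?_) j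
    · simp only [Fin.cons_zero]
      rw [Finset.sum_const, hm]
      simp
    · simp only [Fin.cons_succ]
      have := congrFun hsum i
      simpa [Finset.sum_apply] using this
  · rintro ⟨U, hU⟩
    have hUj : ∀ j, zVec d j +
        (Fin.cons ((∑ i, (b i : ℝ)) / 3) (fun i => (b i : ℝ)) : Fin (d + 1) → ℝ) j
        = ∑ v ∈ U, toVec v j := by
      intro j
      have := congrFun hU j
      simpa [Finset.sum_apply] using this
    -- the functional value of the target point equals that of z
    have hcons0 : ∑ j, (wVec d j : ℝ) *
        (Fin.cons ((∑ i, (b i : ℝ)) / 3) (fun i => (b i : ℝ)) : Fin (d + 1) → ℝ) j = 0 := by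
      rw [Fin.sum_univ_succ]
      have h0 : (wVec d 0 : ℝ) = -3 := by norm_num [wVec]
      have hs : ∀ i : Fin d, (wVec d i.succ : ℝ) = 1 := fun i => by
        simp [wVec, Fin.succ_ne_zero]
      simp only [h0, hs, one_mul, Fin.cons_zero, Fin.cons_succ]
      have h3 : (∑ i, (b i : ℝ)) / 3 * 3 = ∑ i, (b i : ℝ) :=
        div_mul_cancel₀ _ (by norm_num)
      linarith
    have hzfun : ∑ j, (wVec d j : ℝ) * zVec d j = ((∑ v ∈ Apos d, ipZ d v : ℤ) : ℝ) := by
      rw [← functional_sum]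
      refine Finset.sum_congr rfl fun j _ => ?_
      rw [zVec_eq]
      simp [Finset.sum_apply]
    have key : ∑ v ∈ U, ipZ d v = ∑ v ∈ Apos d, ipZ d v := by
      have hreal : ((∑ v ∈ U, ipZ d v : ℤ) : ℝ) = ((∑ v ∈ Apos d, ipZ d v : ℤ) : ℝ) := by
        rw [← functional_sum, ← hzfun]
        have : ∀ j, (wVec d j : ℝ) * ∑ v ∈ U, toVec v j
            = (wVec d j : ℝ) * zVec d j + (wVec d j : ℝ) *
              (Fin.cons ((∑ i, (b i : ℝ)) / 3) (fun i => (b i : ℝ)) : Fin (d + 1) → ℝ) j := by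
          intro j
          rw [← hUj j]; ring
        rw [Finset.sum_congr rfl fun j _ => this j, Finset.sum_add_distrib, hcons0, add_zero]
      exact_mod_cast hreal
    have hsplit : ∑ v ∈ U ∩ Apos d, ipZ d v + ∑ v ∈ U \ Apos d, ipZ d v
        = ∑ v ∈ U, ipZ d v := Finset.sum_inter_add_sum_sdiff U (Apos d) _
    have hpos : ∀ v ∈ Apos d, 0 < ipZ d v := fun v hv => (Finset.mem_filter.mp hv).2
    have hnonpos : ∀ v ∈ U \ Apos d, ipZ d v ≤ 0 := by
      intro v hv
      have := (Finset.mem_sdiff.mp hv).2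
      by_contra h
      exact this (Finset.mem_filter.mpr ⟨Finset.mem_univ v, by omega⟩)
    have h1 : ∑ v ∈ U ∩ Apos d, ipZ d v ≤ ∑ v ∈ Apos d, ipZ d v :=
      Finset.sum_le_sum_of_subset_of_nonneg Finset.inter_subset_right
        (fun v hv _ => (hpos v hv).le)
    have h2 : ∑ v ∈ U \ Apos d, ipZ d v ≤ 0 := Finset.sum_nonpos hnonpos
    have hdiff0 : ∑ v ∈ U \ Apos d, ipZ d v = 0 := by
      by_contra h
      have hlt : ∑ v ∈ U \ Apos d, ipZ d v < 0 := lt_of_le_of_ne h2 h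
      omega
    have hz0 : ∀ v ∈ U \ Apos d, ipZ d v = 0 := by
      intro v hv
      exact (Finset.sum_eq_zero_iff_of_nonpos hnonpos).mp hdiff0 v hv
    have hsub : Apos d ⊆ U := by
      by_contra h
      obtain ⟨v, hvA, hvU⟩ := Finset.not_subset.mp h
      have hlt : ∑ x ∈ U ∩ Apos d, ipZ d x < ∑ x ∈ Apos d, ipZ d x :=
        Finset.sum_lt_sum_of_subset Finset.inter_subset_right hvA
          (fun hmem => hvU (Finset.mem_inter.mp hmem).1) (hpos v hvA)
          (fun j hj _ => (hpos j hj).le)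
      omega
    have hinter : U ∩ Apos d = Apos d := Finset.inter_eq_right.mpr hsub
    -- tail sums over the level set T
    have hT : ∀ i : Fin d, ∑ v ∈ U \ Apos d, toVec v i.succ = (b i : ℝ) := by
      intro i
      have hsp : ∑ v ∈ U ∩ Apos d, toVec v i.succ + ∑ v ∈ U \ Apos d, toVec v i.succ
          = ∑ v ∈ U, toVec v i.succ := Finset.sum_inter_add_sum_sdiff U (Apos d) _
      have hzv : zVec d i.succ = ∑ v ∈ Apos d, toVec v i.succ := by
        rw [zVec_eq]; simp [Finset.sum_apply]
      have := hUj i.succ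
      rw [Fin.cons_succ] at this
      rw [hinter] at hsp
      rw [hzv] at this
      linarith
    -- vectors in T with first coordinate true have 3-uniform tails
    have hcard3 : ∀ v ∈ U \ Apos d, v 0 = true →
        (Finset.univ.filter fun i : Fin d => v i.succ = true).card = 3 := by
      intro v hv h0
      have := hz0 v hv
      rw [ipZ_eq, h0, if_pos rfl] at this
      omega
    have hzero : ∀ v ∈ U \ Apos d, v 0 = false → ∀ i : Fin d, v i.succ = false := by
      intro v hv h0 i
      have := hz0 v hv
      rw [ipZ_eq, h0] at this
      simp only [Bool.false_eq_true, if_false, zero_add, Nat.cast_eq_zero,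
        Finset.card_eq_zero, Finset.filter_eq_empty_iff] at this
      have := this (Finset.mem_univ i)
      simpa using this
    set T1 : Finset (Fin (d + 1) → Bool) := (U \ Apos d).filter (fun v => v 0 = true) with hT1
    have hinj : ∀ v ∈ T1, ∀ v' ∈ T1, (fun i : Fin d => v i.succ) = (fun i : Fin d => v' i.succ)
        → v = v' := by
      intro v hv v' hv' h
      have h0 : v 0 = true := (Finset.mem_filter.mp hv).2
      have h0' : v' 0 = true := (Finset.mem_filter.mp hv').2
      funext j
      refine Fin.cases ?_ (fun i => ?_) j
      · rw [h0, h0']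
      · exact congrFun h i
    refine ⟨T1.image (fun v i => v i.succ), ?_, ?_⟩
    · intro u hu
      obtain ⟨v, hv, rfl⟩ := Finset.mem_image.mp hu
      exact hcard3 v (Finset.mem_filter.mp hv).1 (Finset.mem_filter.mp hv).2
    · funext i
      rw [Finset.sum_apply, Finset.sum_image hinj]
      have step : ∀ v ∈ T1, toVec (fun i : Fin d => v i.succ) i = toVec v i.succ :=
        fun v _ => rfl
      rw [Finset.sum_congr rfl step]
      have hext : ∑ v ∈ T1, toVec v i.succ = ∑ v ∈ U \ Apos d, toVec v i.succ := by
        refine Finset.sum_subset (Finset.filter_subset _ _) ?_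
        intro v hv hvn
        have h0 : v 0 = false := by
          rcases Bool.eq_false_or_eq_true (v 0) with h | h
          · exact absurd (Finset.mem_filter.mpr ⟨hv, h⟩) hvn
          · exact h
        have := hzero v hv h0 i
        simp [toVec, this]
      rw [hext, hT i]
end

section
/- The convex hull of the set S of degree sequences of hypergraphs on vertex set {1,…,d} equals the zonotope {Σ_{v∈{0,1}^d} c_v·v : 0 ≤ c_v ≤ 1 for all v ∈ {0,1}^d}, i.e. the Minkowski sum of the line segments [0, v] over all v ∈ {0,1}^d. -/
open Finset

open Pointwise

lemma degSeqs_eq (d : ℕ) :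
    degSeqs d = ∑ v : Fin d → Bool, ({0, toVec v} : Set (Fin d → ℝ)) := by
  ext b
  rw [Set.mem_finset_sum]
  constructor
  · rintro ⟨U, rfl⟩
    refine ⟨fun v => if v ∈ U then toVec v else 0, fun {v} _ => ?_, ?_⟩
    · by_cases h : v ∈ U <;> simp [h]
    · rw [Finset.sum_ite_mem, Finset.univ_inter]
  · rintro ⟨g, hg, rfl⟩
    classical
    refine ⟨Finset.univ.filter (fun v => g v = toVec v ∧ toVec v ≠ 0), ?_⟩
    rw [Finset.sum_filter]
    apply Finset.sum_congr rfl
    intro v _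
    rcases hg (Finset.mem_univ v) with h | h
    · rw [h, if_neg]
      rintro ⟨h1, h2⟩
      exact h2 h1.symm
    · simp only [Set.mem_singleton_iff] at h
      by_cases h0 : toVec v = 0 <;> simp [h, h0]

lemma dsPolytope_eq (d : ℕ) :
    dsPolytope d = ∑ v : Fin d → Bool, segment ℝ (0 : Fin d → ℝ) (toVec v) := by
  ext p
  rw [Set.mem_finset_sum]
  constructor
  · rintro ⟨c, hc, rfl⟩
    refine ⟨fun v => c v • toVec v, fun {v} _ => ?_, rfl⟩
    rw [segment_eq_image ℝ]
    exact ⟨c v, Set.mem_Icc.2 (hc v), by simp⟩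
  · rintro ⟨g, hg, rfl⟩
    choose! c hc hgc using fun v =>
      (segment_eq_image ℝ (0 : Fin d → ℝ) (toVec v) ▸ hg (Finset.mem_univ v) : g v ∈ _)
    refine ⟨c, fun v => Set.mem_Icc.1 (hc v), ?_⟩
    apply Finset.sum_congr rfl
    intro v _
    rw [← hgc v]; simp

/-- The convex hull of the set of degree sequences equals the zonotope
`{∑_{v ∈ {0,1}^d} c_v v : 0 ≤ c_v ≤ 1}`. -/
theorem convexHull_degSeqs_eq_dsPolytope (d : ℕ) :
    convexHull ℝ (degSeqs d) = dsPolytope d := by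
  rw [degSeqs_eq, dsPolytope_eq, convexHull_sum]
  exact Finset.sum_congr rfl fun v _ => convexHull_pair _ _
end

section
/- Let d = C(8,2) + C(8,4) = 98 and let v_1, …, v_8 ∈ {0,1}^d be the rows of the 8 × d matrix B whose first C(8,2) columns are all vectors in {0,1}^8 with exactly two ones and whose remaining C(8,4) columns are all vectors in {0,1}^8 with exactly four ones. Let b := (1/2)(v_1 + v_2 + ⋯ + v_8), the integer vector whose first C(8,2) coordinates equal 1 and whose remaining C(8,4) coordinates equal 2. Then b cannot be written as a sum of a set of pairwise distinct vectors from {v_1, …, v_8}; in particular, b is not a sum of pairwise distinct 0/1 vectors lying in the linear span of {v_1, …, v_8}. -/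
set_option maxRecDepth 40000


open Finset

/-- The vector `b = (1/2)(v₁ + ⋯ + v₈)`: its coordinates on the weight-2 columns are `1`
and on the weight-4 columns are `2`. -/
noncomputable def bVec : ColIdx → ℝ :=
  (1 / 2 : ℝ) • ∑ k : Fin 8, rowVec k

/-- Build a column from a subset of `Fin 8` of size 2 or 4. -/
def mkCol (s : Finset (Fin 8)) (h : s.card = 2 ∨ s.card = 4) : ColIdx :=
  ⟨fun k => decide (k ∈ s), by
    have hf : (Finset.univ.filter fun k => decide (k ∈ s) = true) = s := by
      ext k; simp
    simpa [hf] using h⟩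

lemma filter_mkCol (s : Finset (Fin 8)) (h : s.card = 2 ∨ s.card = 4) :
    (Finset.univ.filter fun k => (mkCol s h).1 k = true) = s := by
  ext k; simp [mkCol]

/-- Any vector in the span of the rows is given by coefficients. -/
lemma exists_coeff (v : ColIdx → ℝ) (hv : v ∈ Submodule.span ℝ (Set.range rowVec)) :
    ∃ a : Fin 8 → ℝ, ∀ c : ColIdx,
      v c = ∑ k ∈ Finset.univ.filter (fun k => c.1 k = true), a k := by
  rw [Submodule.mem_span_range_iff_exists_fun ℝ] at hv
  obtain ⟨a, ha⟩ := hv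
  refine ⟨a, fun c => ?_⟩
  rw [← ha]
  simp [rowVec, Finset.sum_apply, Finset.sum_filter, mul_comm]

/-- Classification of coefficient vectors whose sums over 2- and 4-subsets are 0/1. -/
lemma classify (a : Fin 8 → ℝ)
    (H : ∀ s : Finset (Fin 8), s.card = 2 ∨ s.card = 4 →
      (∑ k ∈ s, a k) = 0 ∨ (∑ k ∈ s, a k) = 1) :
    (∀ k, a k = 0) ∨ ∃ m, ∀ k, a k = if k = m then 1 else 0 := by
  have H2 : ∀ i j : Fin 8, i ≠ j → a i + a j = 0 ∨ a i + a j = 1 := by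
    intro i j hij
    have := H {i, j} (Or.inl (card_pair hij))
    rwa [sum_pair hij] at this
  have H4 : ∀ i j k l : Fin 8, i ≠ j → i ≠ k → i ≠ l → j ≠ k → j ≠ l → k ≠ l →
      a i + a j + a k + a l = 0 ∨ a i + a j + a k + a l = 1 := by
    intro i j k l hij hik hil hjk hjl hkl
    have hcard : ({i, j, k, l} : Finset (Fin 8)).card = 4 := by
      rw [card_insert_of_notMem (by simp [hij, hik, hil]),
        card_insert_of_notMem (by simp [hjk, hjl]), card_pair hkl]
    have := H {i, j, k, l} (Or.inr hcard)
    rw [sum_insert (by simp [hij, hik, hil]), sum_insert (by simp [hjk, hjl]),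
      sum_pair hkl] at this
    rcases this with h | h
    · left; linarith
    · right; linarith
  by_cases hex : ∃ i j : Fin 8, i ≠ j ∧ a i + a j = 1
  · right
    obtain ⟨i, j, hij, hone⟩ := hex
    have hout : ∀ k, k ≠ i → k ≠ j → a k = 0 := by
      intro k hki hkj
      have hdec3 : ∀ x y z : Fin 8,
          ∃ l m : Fin 8, l ≠ m ∧ (l ≠ x ∧ l ≠ y ∧ l ≠ z) ∧ (m ≠ x ∧ m ≠ y ∧ m ≠ z) := by
        decide
      obtain ⟨l, m, hlm, hl, hm⟩ := hdec3 i j k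
      have key : ∀ p q : Fin 8, p ≠ q → p ≠ i → p ≠ j → q ≠ i → q ≠ j →
          a p + a q = 0 := by
        intro p q hpq hpi hpj hqi hqj
        have h4 := H4 i j p q hij (Ne.symm hpi) (Ne.symm hqi) (Ne.symm hpj) (Ne.symm hqj) hpq
        have h2 := H2 p q hpq
        rcases h2 with h2 | h2
        · exact h2
        · rcases h4 with h4 | h4 <;> linarith
      have h1 := key k l (fun h => hl.2.2 h.symm) hki hkj hl.1 hl.2.1
      have h2 := key k m (fun h => hm.2.2 h.symm) hki hkj hm.1 hm.2.1
      have h3 := key l m hlm hl.1 hl.2.1 hm.1 hm.2.1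
      linarith
    have hdec2 : ∀ x y : Fin 8, ∃ p : Fin 8, p ≠ x ∧ p ≠ y := by decide
    obtain ⟨p, hpi, hpj⟩ := hdec2 i j
    have hp0 : a p = 0 := hout p hpi hpj
    have hi01 : a i + a p = 0 ∨ a i + a p = 1 := H2 i p (Ne.symm hpi)
    rcases hi01 with hi0 | hi1
    · -- a i = 0, so a j = 1
      refine ⟨j, fun k => ?_⟩
      by_cases hkj : k = j
      · subst hkj; simp; linarith
      · rw [if_neg hkj]
        by_cases hki : k = i
        · subst hki; linarith
        · exact hout k hki hkj
    · -- a i = 1, so a j = 0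
      refine ⟨i, fun k => ?_⟩
      by_cases hki : k = i
      · subst hki; simp; linarith
      · rw [if_neg hki]
        by_cases hkj : k = j
        · subst hkj; linarith
        · exact hout k hki hkj
  · left
    push_neg at hex
    have key : ∀ p q : Fin 8, p ≠ q → a p + a q = 0 := by
      intro p q h
      rcases H2 p q h with h0 | h1
      · exact h0
      · exact absurd h1 (hex p q h)
    intro k
    obtain ⟨l, m, h1, h2, h3⟩ : ∃ l m : Fin 8, k ≠ l ∧ k ≠ m ∧ l ≠ m := by
      revert k; decide
    have := key k l h1
    have := key k m h2
    have := key l m h3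
    linarith

lemma rowVec_injective : Function.Injective rowVec := by
  have hdec2 : ∀ x y : Fin 8, ∃ k : Fin 8, k ≠ x ∧ k ≠ y := by decide
  intro m m' h
  by_contra hne
  obtain ⟨k, hk1, hk2⟩ := hdec2 m m'
  have hcard : ({m, k} : Finset (Fin 8)).card = 2 := card_pair (Ne.symm hk1)
  have hc := congrFun h (mkCol {m, k} (Or.inl hcard))
  have hm' : m' ≠ m := fun h' => hne h'.symm
  simp [rowVec, mkCol, hm', Ne.symm hk2] at hc

lemma sum_rowVec_apply (c : ColIdx) :
    ∑ k, rowVec k c = ((Finset.univ.filter fun k => c.1 k = true).card : ℝ) := by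
  simp [rowVec, Finset.sum_boole]

lemma not_sum_01_span :
    ¬ ∃ T : Finset (ColIdx → ℝ),
        (∀ v ∈ T, (∀ c, v c = 0 ∨ v c = 1) ∧
          v ∈ Submodule.span ℝ (Set.range rowVec)) ∧
        bVec = ∑ v ∈ T, v := by
  classical
  rintro ⟨T, hT, hb⟩
  have hclass : ∀ v ∈ T, v = 0 ∨ ∃ m, v = rowVec m := by
    intro v hv
    obtain ⟨a, ha⟩ := exists_coeff v (hT v hv).2
    have hH : ∀ s : Finset (Fin 8), s.card = 2 ∨ s.card = 4 →
        (∑ k ∈ s, a k) = 0 ∨ (∑ k ∈ s, a k) = 1 := by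
      intro s hs
      have h01 := (hT v hv).1 (mkCol s hs)
      rwa [ha (mkCol s hs), filter_mkCol s hs] at h01
    rcases classify a hH with h0 | ⟨m, hm⟩
    · left; funext c
      rw [ha c]
      simp [h0]
    · right
      refine ⟨m, funext fun c => ?_⟩
      rw [ha c]
      simp only [hm]
      rw [Finset.sum_ite_eq' _ m (fun _ => (1 : ℝ))]
      simp [rowVec]
  set T' := T.filter (fun v => v ≠ 0) with hT'def
  have hsum' : ∑ v ∈ T', v = ∑ v ∈ T, v := by
    apply Finset.sum_subset (filter_subset _ _)
    intro v hv hnv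
    by_contra h0
    exact hnv (mem_filter.mpr ⟨hv, h0⟩)
  set S := Finset.univ.filter (fun m => rowVec m ∈ T') with hSdef
  have him : T' = S.image rowVec := by
    ext v
    simp only [hSdef, mem_image, mem_filter, mem_univ, true_and]
    constructor
    · intro hv
      rcases hclass v (mem_filter.mp hv).1 with h0 | ⟨m, rfl⟩
      · exact absurd h0 (mem_filter.mp hv).2
      · exact ⟨m, hv, rfl⟩
    · rintro ⟨m, hm, rfl⟩; exact hm
  have hSsum : bVec = ∑ m ∈ S, rowVec m := by
    rw [hb, ← hsum', him, Finset.sum_image (fun x _ y _ h => rowVec_injective h)]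
  have hcount : ∀ i j : Fin 8, i ≠ j →
      (∑ m ∈ S, (if m = i ∨ m = j then (1 : ℕ) else 0)) = 1 := by
    intro i j hij
    have hc := congrFun hSsum (mkCol {i, j} (Or.inl (card_pair hij)))
    have hL : bVec (mkCol {i, j} (Or.inl (card_pair hij))) = 1 := by
      simp only [bVec, Pi.smul_apply, smul_eq_mul, Finset.sum_apply]
      rw [show (∑ k : Fin 8, rowVec k (mkCol {i, j} (Or.inl (card_pair hij)))) =
        ∑ k, rowVec k (mkCol {i, j} (Or.inl (card_pair hij))) from rfl, sum_rowVec_apply, filter_mkCol, card_pair hij]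
      norm_num
    rw [hL] at hc
    have hR : (∑ m ∈ S, rowVec m) (mkCol {i, j} (Or.inl (card_pair hij))) =
        ((∑ m ∈ S, (if m = i ∨ m = j then (1 : ℕ) else 0) : ℕ) : ℝ) := by
      push_cast
      rw [Finset.sum_apply]
      apply Finset.sum_congr rfl
      intro m _
      simp [rowVec, mkCol]
    rw [hR] at hc
    exact_mod_cast hc.symm
  obtain ⟨i, j, hij, hne⟩ :
      ∃ i j : Fin 8, i ≠ j ∧ (∑ m ∈ S, (if m = i ∨ m = j then (1 : ℕ) else 0)) ≠ 1 := by
    have hdec : ∀ S' : Finset (Fin 8),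
        ∃ i j : Fin 8, i ≠ j ∧ (∑ m ∈ S', (if m = i ∨ m = j then (1 : ℕ) else 0)) ≠ 1 := by
      decide
    exact hdec S
  exact hne (hcount i j hij)

/-- `b = (1/2)(v₁ + ⋯ + v₈)` is not a sum of a set of pairwise distinct vectors from
`{v₁, …, v₈}`; in particular it is not a sum of a set of pairwise distinct 0/1 vectors
lying in the real linear span of `{v₁, …, v₈}`. -/
theorem bVec_not_sum_of_rows :
    (¬ ∃ T : Finset (ColIdx → ℝ), ↑T ⊆ Set.range rowVec ∧ bVec = ∑ v ∈ T, v) ∧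
    (¬ ∃ T : Finset (ColIdx → ℝ),
        (∀ v ∈ T, (∀ c, v c = 0 ∨ v c = 1) ∧
          v ∈ Submodule.span ℝ (Set.range rowVec)) ∧
        bVec = ∑ v ∈ T, v) := by
  constructor
  · rintro ⟨T, hsub, hb⟩
    apply not_sum_01_span
    refine ⟨T, fun v hv => ?_, hb⟩
    obtain ⟨m, rfl⟩ := hsub hv
    constructor
    · intro c
      unfold rowVec
      split
      · exact Or.inr rfl
      · exact Or.inl rfl
    · exact Submodule.subset_span (Set.mem_range_self m)
  · exact not_sum_01_span
end
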